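/- For every positive integer n, every ℓ ∈ {0,1,2,3,4}, and every nonempty set U ⊆ [n] with |U| ≥ 8 − 2ℓ, the number of wickets W ∈ [n]⁹ containing U is at most (9!)^{ℓ+1}·n^{ℓ}. -/

import Mathlib

set_option maxRecDepth 10000

/-- A *wicket* in `[n]` is a 9-tuple `(x₁,y₁,z₁,x₂,y₂,z₂,x₃,y₃,z₃)` of pairwise distinct
elements of `{1, …, n}` with `xᵢ + yᵢ = zᵢ` for `i = 1,2,3` and `x₁ + x₂ = x₃`.
Here `w 0, w 1, w 2, w 3, w 4, w 5, w 6, w 7, w 8` are `x₁,y₁,z₁,x₂,y₂,z₂,x₃,y₃,z₃`. -/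
def IsWicket (n : ℕ) (w : Fin 9 → ℕ) : Prop :=
  (∀ i, w i ∈ Finset.Icc 1 n) ∧ Function.Injective w ∧
    w 0 + w 1 = w 2 ∧ w 3 + w 4 = w 5 ∧ w 6 + w 7 = w 8 ∧ w 0 + w 3 = w 6


def extraList (b : Fin 9 → Bool) : List (Fin 9) :=
  (if b 1 || b 2 then [] else [1]) ++
  (if b 4 || b 5 then [] else [4]) ++
  (if b 7 || b 8 then [] else [7]) ++
  (let c0 := b 0 || (b 1 && b 2); let c3 := b 3 || (b 4 && b 5); let c6 := b 6 || (b 7 && b 8);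
    if (c0 && c3) || (c0 && c6) || (c3 && c6) then []
    else if c3 then [0] else if c0 || c6 then [3] else [0, 3])

lemma det_lemma (b : Fin 9 → Bool) (w w' : Fin 9 → ℕ)
    (hw2 : w 0 + w 1 = w 2) (hw5 : w 3 + w 4 = w 5) (hw8 : w 6 + w 7 = w 8)
    (hw6 : w 0 + w 3 = w 6)
    (hv2 : w' 0 + w' 1 = w' 2) (hv5 : w' 3 + w' 4 = w' 5) (hv8 : w' 6 + w' 7 = w' 8)
    (hv6 : w' 0 + w' 3 = w' 6)
    (hb : ∀ i, b i = true → w i = w' i)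
    (he : ∀ i ∈ extraList b, w i = w' i) : w = w' := by
  have h1 : w 1 = w' 1 ∨ w 2 = w' 2 := by
    by_cases hb1 : b 1 = true
    · exact Or.inl (hb _ hb1)
    by_cases hb2 : b 2 = true
    · exact Or.inr (hb _ hb2)
    exact Or.inl (he 1 (by simp [extraList, List.mem_append, hb1, hb2]))
  have h4 : w 4 = w' 4 ∨ w 5 = w' 5 := by
    by_cases hb1 : b 4 = true
    · exact Or.inl (hb _ hb1)
    by_cases hb2 : b 5 = true
    · exact Or.inr (hb _ hb2)
    exact Or.inl (he 4 (by simp [extraList, List.mem_append, hb1, hb2]))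
  have h7 : w 7 = w' 7 ∨ w 8 = w' 8 := by
    by_cases hb1 : b 7 = true
    · exact Or.inl (hb _ hb1)
    by_cases hb2 : b 8 = true
    · exact Or.inr (hb _ hb2)
    exact Or.inl (he 7 (by simp [extraList, List.mem_append, hb1, hb2]))
  have K0 : (b 0 || (b 1 && b 2)) = true → w 0 = w' 0 := by
    intro h
    simp only [Bool.or_eq_true, Bool.and_eq_true] at h
    rcases h with h | ⟨ha, hc⟩
    · exact hb _ h
    · have e1 := hb _ ha; have e2 := hb _ hc; omega
  have K3 : (b 3 || (b 4 && b 5)) = true → w 3 = w' 3 := by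
    intro h
    simp only [Bool.or_eq_true, Bool.and_eq_true] at h
    rcases h with h | ⟨ha, hc⟩
    · exact hb _ h
    · have e1 := hb _ ha; have e2 := hb _ hc; omega
  have K6 : (b 6 || (b 7 && b 8)) = true → w 6 = w' 6 := by
    intro h
    simp only [Bool.or_eq_true, Bool.and_eq_true] at h
    rcases h with h | ⟨ha, hc⟩
    · exact hb _ h
    · have e1 := hb _ ha; have e2 := hb _ hc; omega
  have h036 : w 0 = w' 0 ∧ w 3 = w' 3 ∧ w 6 = w' 6 := by
    by_cases hA : (b 0 || (b 1 && b 2)) = true <;>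
    by_cases hB : (b 3 || (b 4 && b 5)) = true <;>
    by_cases hC : (b 6 || (b 7 && b 8)) = true
    · have := K0 hA; have := K3 hB; omega
    · have := K0 hA; have := K3 hB; omega
    · have := K0 hA; have := K6 hC; omega
    · have e3 := he 3 (by simp [extraList, List.mem_append, hA, hB, hC])
      have := K0 hA; omega
    · have := K3 hB; have := K6 hC; omega
    · have e0 := he 0 (by simp [extraList, List.mem_append, hA, hB, hC])
      have := K3 hB; omega
    · have e3 := he 3 (by simp [extraList, List.mem_append, hA, hB, hC])
      have := K6 hC; omega
    · have e0 := he 0 (by simp [extraList, List.mem_append, hA, hB, hC])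
      have e3 := he 3 (by simp [extraList, List.mem_append, hA, hB, hC])
      omega
  obtain ⟨e0, e3, e6⟩ := h036
  have g1 : w 1 = w' 1 := by rcases h1 with h | h <;> omega
  have g2 : w 2 = w' 2 := by omega
  have g4 : w 4 = w' 4 := by rcases h4 with h | h <;> omega
  have g5 : w 5 = w' 5 := by omega
  have g7 : w 7 = w' 7 := by rcases h7 with h | h <;> omega
  have g8 : w 8 = w' 8 := by omega
  funext i
  fin_cases i
  · exact e0
  · exact g1
  · exact g2
  · exact e3
  · exact g4
  · exact g5
  · exact e6
  · exact g7
  · exact g8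

lemma extra_len (b : Fin 9 → Bool) :
    ((Finset.univ.filter (fun i => b i = true)).card = 8 → (extraList b).length ≤ 0) ∧
    ((Finset.univ.filter (fun i => b i = true)).card = 6 → (extraList b).length ≤ 1) ∧
    ((Finset.univ.filter (fun i => b i = true)).card = 4 → (extraList b).length ≤ 2) ∧
    ((Finset.univ.filter (fun i => b i = true)).card = 2 → (extraList b).length ≤ 3) ∧
    (1 ≤ (Finset.univ.filter (fun i => b i = true)).card → (extraList b).length ≤ 4) := by
  revert b; decide



/-- Claim 14: for `ℓ ∈ {0,1,2,3,4}` and any nonempty `U ⊆ [n]` with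
`|U| ≥ 8 - 2ℓ`, the number of wickets containing every element of `U` among their entries
is at most `(9!)^{ℓ+1}·n^ℓ`. -/
theorem stmt7 (n : ℕ) (hn : 0 < n) (ℓ : ℕ) (hℓ : ℓ ≤ 4) (U : Finset ℕ)
    (hU : U.Nonempty) (hUn : U ⊆ Finset.Icc 1 n) (hcard : 8 - 2 * ℓ ≤ U.card) :
    {w : Fin 9 → ℕ | IsWicket n w ∧ ∀ u ∈ U, ∃ i, w i = u}.ncard ≤
      (Nat.factorial 9) ^ (ℓ + 1) * n ^ ℓ := by

  classical
  have hUcard1 : 1 ≤ U.card := Finset.card_pos.mpr hU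
  set t := max (8 - 2 * ℓ) 1 with ht
  have htU : t ≤ U.card := by omega
  obtain ⟨U', hU'sub, hU'card⟩ := Finset.exists_subset_card_eq htU
  set W : Set (Fin 9 → ℕ) := {w | IsWicket n w ∧ ∀ u ∈ U, ∃ i, w i = u} with hW
  have hmem : ∀ p : W, IsWicket n p.1 ∧ ∀ u ∈ U, ∃ i, p.1 i = u := fun p => p.2
  let pos : W → {x // x ∈ U'} → Fin 9 := fun p u => ((hmem p).2 u.1 (hU'sub u.2)).choose
  have posSpec : ∀ (p : W) (u : {x // x ∈ U'}), p.1 (pos p u) = u.1 :=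
    fun p u => ((hmem p).2 u.1 (hU'sub u.2)).choose_spec
  have posInj : ∀ p, Function.Injective (pos p) := by
    intro p u v h
    have h1 := posSpec p u
    have h2 := posSpec p v
    rw [h] at h1
    exact Subtype.ext (h1.symm.trans h2)
  let bf : W → Fin 9 → Bool := fun p i => decide (∃ u, pos p u = i)
  have hbcard : ∀ p : W, (Finset.univ.filter (fun i => bf p i = true)).card = t := by
    intro p
    have himg : Finset.univ.filter (fun i => bf p i = true)
        = Finset.univ.image (pos p) := by
      ext i
      simp [bf]
    rw [himg, Finset.card_image_of_injective _ (posInj p), Finset.card_univ,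
      Fintype.card_coe, hU'card]
  have hlen : ∀ p : W, (extraList (bf p)).length ≤ ℓ := by
    intro p
    have h := extra_len (bf p)
    have hc := hbcard p
    interval_cases ℓ
    · exact h.1 (by omega)
    · exact h.2.1 (by omega)
    · exact h.2.2.1 (by omega)
    · exact h.2.2.2.1 (by omega)
    · exact h.2.2.2.2 (by omega)
  let ef : W → Fin ℓ → Fin 9 := fun p j => (extraList (bf p)).getD j.1 0
  have hval : ∀ (p : W) (i : Fin 9), 1 ≤ p.1 i ∧ p.1 i ≤ n := by
    intro p i
    have := (hmem p).1.1 i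
    simpa [Finset.mem_Icc] using this
  let F : W → ({x // x ∈ U'} ↪ Fin 9) × (Fin ℓ → Fin n) :=
    fun p => (⟨pos p, posInj p⟩, fun j => ⟨p.1 (ef p j) - 1, by
      have := hval p (ef p j); omega⟩)
  have hFinj : Function.Injective F := by
    intro p q hEq
    have hpos : pos p = pos q := by
      have h := congrArg (fun x => ((x.1 : {x // x ∈ U'} ↪ Fin 9) : {x // x ∈ U'} → Fin 9)) hEq
      exact h
    have hbf : bf p = bf q := by
      funext i; simp only [bf, hpos]
    have hef : ef p = ef q := by
      funext j; simp only [ef, hbf]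
    have hres := congrArg Prod.snd hEq
    obtain ⟨⟨hIcc, hInj, e2, e5, e8, e6⟩, hcon⟩ := hmem p
    obtain ⟨⟨hIcc', hInj', f2, f5, f8, f6⟩, hcon'⟩ := hmem q
    have hb' : ∀ i, bf p i = true → p.1 i = q.1 i := by
      intro i hi
      have hex : ∃ u, pos p u = i := by simpa [bf] using hi
      obtain ⟨u, hu⟩ := hex
      have h1 := posSpec p u
      have h2 := posSpec q u
      rw [hu] at h1
      rw [← hpos, hu] at h2
      omega
    have he' : ∀ i ∈ extraList (bf p), p.1 i = q.1 i := by
      intro i hiMem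
      obtain ⟨j, hj, hji⟩ := List.getElem_of_mem hiMem
      have hjl : j < ℓ := lt_of_lt_of_le hj (hlen p)
      have hq := congrFun hres ⟨j, hjl⟩
      simp only [F] at hq
      have hq' : p.1 (ef p ⟨j, hjl⟩) - 1 = q.1 (ef q ⟨j, hjl⟩) - 1 := congrArg Fin.val hq
      have hv1 := hval p (ef p ⟨j, hjl⟩)
      have hv2 := hval q (ef q ⟨j, hjl⟩)
      have hefj : ef p ⟨j, hjl⟩ = i := by
        simp only [ef]
        rw [List.getD_eq_getElem _ _ hj]
        exact hji
      rw [hefj] at hq' hv1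
      rw [← hef, hefj] at hq' hv2
      omega
    have hweq := det_lemma (bf p) p.1 q.1 e2 e5 e8 e6 f2 f5 f8 f6 hb' he'
    exact Subtype.ext hweq
  have hle1 : W.ncard ≤ Nat.card (({x // x ∈ U'} ↪ Fin 9) × (Fin ℓ → Fin n)) := by
    rw [← Nat.card_coe_set_eq]
    exact Nat.card_le_card_of_injective F hFinj
  have hcardT : Nat.card (({x // x ∈ U'} ↪ Fin 9) × (Fin ℓ → Fin n))
      = Nat.descFactorial 9 t * n ^ ℓ := by
    simp [Nat.card_eq_fintype_card, Fintype.card_prod, Fintype.card_embedding_eq,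
      Fintype.card_coe, hU'card, Fintype.card_fun]
  calc W.ncard ≤ Nat.descFactorial 9 t * n ^ ℓ := by rw [← hcardT]; exact hle1
    _ ≤ Nat.factorial 9 * n ^ ℓ := by
        refine Nat.mul_le_mul_right _ ?_
        have h9 : t ≤ 9 := by omega
        calc Nat.descFactorial 9 t ≤ Nat.factorial (9 - t) * Nat.descFactorial 9 t :=
              Nat.le_mul_of_pos_left _ (Nat.factorial_pos _)
          _ = Nat.factorial 9 := Nat.factorial_mul_descFactorial h9
    _ ≤ (Nat.factorial 9) ^ (ℓ + 1) * n ^ ℓ :=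
        Nat.mul_le_mul_right _ (Nat.le_self_pow (by omega) _)
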